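/- Let K be a compact metrizable topological space and X a real Banach space. Let M₊(K) denote the finite nonnegative Borel measures on K, an ℝ≥0-module under addition and scaling of measures, equipped with the topology of weak convergence (the coarsest topology making μ ↦ ∫ g dμ continuous for every continuous g : K → ℝ). Let T be a superlinear, upper semicontinuous set-valued map assigning to each μ ∈ M₊(K) a nonempty closed subset T(μ) ⊆ X. Suppose f : K → X is continuous and f(x) ∈ T(δ_x) for every x ∈ K, where δ_x is the Dirac measure at x. Then S_f(μ) := ∫_K f dμ (Bochner integral) defines a continuous linear selection of T, and it is the unique continuous linear selection S of T satisfying S(δ_x) = f(x) for all x ∈ K. Conversely, every continuous linear selection S of T equals S_g for the continuous function g(x) = S(δ_x). -/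

import Mathlib

open MeasureTheory Metric Filter Topology
open scoped NNReal ENNReal Pointwise

set_option linter.unusedSectionVars false

section Stmt7Aux

variable {K : Type*} {X : Type*}

section Basic
variable [TopologicalSpace K] [CompactSpace K] [TopologicalSpace.MetrizableSpace K]
  [MeasurableSpace K] [BorelSpace K]
  [NormedAddCommGroup X] [NormedSpace ℝ X] [CompleteSpace X]

noncomputable def dfm (x : K) : FiniteMeasure K := ⟨Measure.dirac x, inferInstance⟩

lemma integrable_cont (f : K → X) (hf : Continuous f) (μ : Measure K) [IsFiniteMeasure μ] :
    Integrable f μ :=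
  hf.integrable_of_hasCompactSupport (isClosed_tsupport f).isCompact

lemma continuous_dfm : Continuous (dfm : K → FiniteMeasure K) := by
  haveI : T2Space K := by
    letI := TopologicalSpace.metrizableSpaceMetric K; infer_instance
  rw [continuous_iff_continuousAt]
  intro x
  rw [ContinuousAt, FiniteMeasure.tendsto_iff_forall_integral_tendsto]
  intro g
  have h : ∀ y : K, (∫ z, g z ∂((dfm y : FiniteMeasure K) : Measure K)) = g y := by
    intro y
    have : ((dfm y : FiniteMeasure K) : Measure K) = Measure.dirac y := rfl
    rw [this, integral_dirac]
  simp_rw [h]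
  exact (g.continuous.tendsto x)

lemma cont_integral_real (g : K → ℝ) (hg : Continuous g) :
    Continuous fun μ : FiniteMeasure K => ∫ x, g x ∂(μ : Measure K) := by
  rw [continuous_iff_continuousAt]
  intro μ
  have := (FiniteMeasure.tendsto_iff_forall_integral_tendsto.mp
    (tendsto_id : Tendsto id (𝓝 μ) (𝓝 μ))) (BoundedContinuousFunction.mkOfCompact ⟨g, hg⟩)
  exact this

noncomputable def comboFM (l : List (ℝ≥0 × K)) : FiniteMeasure K :=
  (l.map fun p => p.1 • dfm p.2).sum

lemma comboFM_nil : comboFM ([] : List (ℝ≥0 × K)) = 0 := rfl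

lemma comboFM_cons (p : ℝ≥0 × K) (l : List (ℝ≥0 × K)) :
    comboFM (p :: l) = p.1 • dfm p.2 + comboFM l := by
  simp [comboFM]

lemma integral_comboFM (f : K → X) (hf : Continuous f) (l : List (ℝ≥0 × K)) :
    (∫ x, f x ∂(comboFM l : Measure K)) = (l.map fun p => (p.1 : ℝ) • f p.2).sum := by
  haveI : T2Space K := by
    letI := TopologicalSpace.metrizableSpaceMetric K; infer_instance
  induction l with
  | nil =>
      have : ((comboFM ([] : List (ℝ≥0 × K)) : FiniteMeasure K) : Measure K) = 0 := by
        rw [comboFM_nil]; rfl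
      simp [this]
  | cons p l ih =>
      rw [comboFM_cons, FiniteMeasure.toMeasure_add, integral_add_measure
        (integrable_cont f hf _) (integrable_cont f hf _), ih]
      have h1 : ((p.1 • dfm p.2 : FiniteMeasure K) : Measure K)
          = (p.1 : ℝ≥0∞) • Measure.dirac p.2 := by
        rw [FiniteMeasure.toMeasure_smul]; rfl
      rw [h1, integral_smul_measure, integral_dirac]
      simp

end Basic

section TPart
variable [TopologicalSpace K] [CompactSpace K] [TopologicalSpace.MetrizableSpace K]
  [MeasurableSpace K] [BorelSpace K]
  [NormedAddCommGroup X] [NormedSpace ℝ X] [CompleteSpace X]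
  {T : FiniteMeasure K → Set X}

lemma zero_mem_T0 (hTne : ∀ μ, (T μ).Nonempty) (hTcl : ∀ μ, IsClosed (T μ))
    (hThom : ∀ c : ℝ≥0, 0 < c → ∀ μ, T (c • μ) = (c : ℝ) • T μ) :
    (0 : X) ∈ T 0 := by
  obtain ⟨a, ha⟩ := hTne 0
  have key : ∀ n : ℕ, ((n : ℝ) + 1)⁻¹ • a ∈ T 0 := by
    intro n
    have hc : (0 : ℝ≥0) < ((n : ℝ≥0) + 1)⁻¹ := by positivity
    have h := hThom _ hc 0
    rw [smul_zero] at h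
    rw [h]
    have hcast : ((((n : ℝ≥0) + 1)⁻¹ : ℝ≥0) : ℝ) = ((n : ℝ) + 1)⁻¹ := by
      push_cast; ring
    rw [hcast]
    exact Set.smul_mem_smul_set ha
  have hlim : Tendsto (fun n : ℕ => ((n : ℝ) + 1)⁻¹ • a) atTop (𝓝 (0 : X)) := by
    have h1 : Tendsto (fun n : ℕ => ((n : ℝ) + 1)⁻¹) atTop (𝓝 (0 : ℝ)) := by
      simpa using tendsto_one_div_add_atTop_nhds_zero_nat (𝕜 := ℝ)
    simpa using h1.smul_const a
  exact (hTcl 0).mem_of_tendsto hlim (Eventually.of_forall key)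

lemma combo_mem (hTne : ∀ μ, (T μ).Nonempty) (hTcl : ∀ μ, IsClosed (T μ))
    (hTsuper : ∀ μ ν, T μ + T ν ⊆ T (μ + ν))
    (hThom : ∀ c : ℝ≥0, 0 < c → ∀ μ, T (c • μ) = (c : ℝ) • T μ)
    (f : K → X) (hfsel : ∀ x : K, f x ∈ T (dfm x)) (l : List (ℝ≥0 × K)) :
    ((l.map fun p => (p.1 : ℝ) • f p.2).sum) ∈ T (comboFM l) := by
  induction l with
  | nil => simpa [comboFM_nil] using zero_mem_T0 hTne hTcl hThom
  | cons p l ih =>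
      rw [comboFM_cons]
      have hp : (p.1 : ℝ) • f p.2 ∈ T (p.1 • dfm p.2) := by
        rcases eq_or_lt_of_le (zero_le (a := p.1)) with h0 | hpos
        · rw [← h0, zero_smul]
          simpa using zero_mem_T0 hTne hTcl hThom
        · rw [hThom p.1 hpos (dfm p.2)]
          exact Set.smul_mem_smul_set (hfsel p.2)
      exact hTsuper _ _ (Set.add_mem_add hp ih)

lemma mem_of_tendstoT (hTne : ∀ μ, (T μ).Nonempty) (hTcl : ∀ μ, IsClosed (T μ))
    (hTusc : ∀ G : Set X, IsOpen G → IsOpen {μ : FiniteMeasure K | T μ ⊆ G})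
    {μ : FiniteMeasure K} {μs : ℕ → FiniteMeasure K} {ys : ℕ → X} {y : X}
    (hμs : Tendsto μs atTop (𝓝 μ)) (hys : ∀ n, ys n ∈ T (μs n))
    (hy : Tendsto ys atTop (𝓝 y)) : y ∈ T μ := by
  rw [(hTcl μ).mem_iff_infDist_zero (hTne μ)]
  by_contra hne
  have hd : 0 < infDist y (T μ) := lt_of_le_of_ne infDist_nonneg (Ne.symm hne)
  set d := infDist y (T μ) with hdd
  set G : Set X := {z | infDist z (T μ) < d / 2} with hG
  have hGopen : IsOpen G := isOpen_lt (continuous_infDist_pt _) continuous_const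
  have hμG : μ ∈ {ν : FiniteMeasure K | T ν ⊆ G} := by
    intro z hz
    simp only [hG, Set.mem_setOf_eq]
    rw [((hTcl μ).mem_iff_infDist_zero (hTne μ)).mp hz]
    linarith
  have hev : ∀ᶠ n in atTop, μs n ∈ {ν : FiniteMeasure K | T ν ⊆ G} :=
    hμs.eventually ((hTusc G hGopen).mem_nhds hμG)
  have hev2 : ∀ᶠ n in atTop, infDist (ys n) (T μ) ≤ d / 2 := by
    filter_upwards [hev] with n hn
    exact le_of_lt (hn (hys n))
  have hcont : Tendsto (fun n => infDist (ys n) (T μ)) atTop (𝓝 (infDist y (T μ))) :=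
    ((continuous_infDist_pt (T μ)).tendsto y).comp hy
  have : d ≤ d / 2 := le_of_tendsto hcont hev2
  linarith

end TPart

section MetricAux
variable [MetricSpace K] [CompactSpace K] [MeasurableSpace K] [BorelSpace K]

lemma integrable_contR (g : K → ℝ) (hg : Continuous g) (μ : Measure K) [IsFiniteMeasure μ] :
    Integrable g μ :=
  hg.integrable_of_hasCompactSupport (isClosed_tsupport g).isCompact

lemma aux_partition (δ : ℝ) (hδ : 0 < δ) (xs : List K) :
    ∀ (ν : FiniteMeasure K),
      (ν : Measure K) ((⋃ x ∈ xs, ball x δ)ᶜ) = 0 →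
      ∃ l : List (ℝ≥0 × K),
        ∀ (g : K → ℝ), Continuous g → ∀ ε : ℝ, 0 ≤ ε →
          (∀ a b : K, dist a b < δ → |g a - g b| ≤ ε) →
          |((l.map fun p => (p.1 : ℝ) • g p.2).sum) - ∫ x, g x ∂(ν : Measure K)|
            ≤ ε * ((ν : Measure K) Set.univ).toReal := by
  induction xs with
  | nil =>
      intro ν hν
      refine ⟨[], fun g hg ε hε hgε => ?_⟩
      have h0 : (ν : Measure K) = 0 := by
        have : ((⋃ x ∈ ([] : List K), ball x δ)ᶜ : Set K) = Set.univ := by simp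
        rw [this] at hν
        exact Measure.measure_univ_eq_zero.mp hν
      simp [h0]
  | cons x xs ih =>
      intro ν hν
      set B := ball x δ with hB
      have mB : MeasurableSet B := measurableSet_ball
      have mU : MeasurableSet (⋃ y ∈ xs, ball y δ) :=
        (isOpen_biUnion fun _ _ => isOpen_ball).measurableSet
      set ν₂ : FiniteMeasure K := ⟨(ν : Measure K).restrict Bᶜ, inferInstance⟩ with hν₂def
      have hν₂coe : (ν₂ : Measure K) = (ν : Measure K).restrict Bᶜ := rfl
      have hν₂ : (ν₂ : Measure K) ((⋃ y ∈ xs, ball y δ)ᶜ) = 0 := by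
        rw [hν₂coe, Measure.restrict_apply mU.compl]
        refine measure_mono_null ?_ hν
        intro z hz
        simp only [Set.mem_inter_iff, Set.mem_compl_iff, Set.mem_iUnion] at hz ⊢
        rintro ⟨y, hy, hzy⟩
        rcases List.mem_cons.mp hy with h | h
        · exact hz.2 (by rwa [h] at hzy)
        · exact hz.1 ⟨y, h, hzy⟩
      obtain ⟨l₂, hl₂⟩ := ih ν₂ hν₂
      refine ⟨(((ν : Measure K) B).toNNReal, x) :: l₂, fun g hg ε hε hgε => ?_⟩
      have hsplit : (ν : Measure K).restrict B + (ν : Measure K).restrict Bᶜ = (ν : Measure K) :=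
        Measure.restrict_add_restrict_compl mB
      have hint1 : Integrable g ((ν : Measure K).restrict B) := integrable_contR g hg _
      have hint2 : Integrable g ((ν : Measure K).restrict Bᶜ) := integrable_contR g hg _
      have hIsplit : ∫ y, g y ∂(ν : Measure K)
          = (∫ y, g y ∂((ν : Measure K).restrict B)) + ∫ y, g y ∂((ν : Measure K).restrict Bᶜ) := by
        have h := integral_add_measure hint1 hint2
        rw [hsplit] at h
        exact h
      have hBfin : (ν : Measure K) B ≠ ⊤ := measure_ne_top _ _
      have hc : ((((ν : Measure K) B).toNNReal : ℝ)) = ((ν : Measure K) B).toReal := rfl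
      have h1 : |((ν : Measure K) B).toReal * g x - ∫ y, g y ∂((ν : Measure K).restrict B)|
          ≤ ε * ((ν : Measure K) B).toReal := by
        have hconst : ∫ _ : K, g x ∂((ν : Measure K).restrict B)
            = ((ν : Measure K) B).toReal * g x := by
          rw [integral_const]
          simp [Measure.restrict_apply_univ, smul_eq_mul]
          left; rfl
        have hsub : ((ν : Measure K) B).toReal * g x - ∫ y, g y ∂((ν : Measure K).restrict B)
            = ∫ y, (g x - g y) ∂((ν : Measure K).restrict B) := by
          rw [integral_sub (integrable_const _) hint1, hconst]
        rw [hsub, ← Real.norm_eq_abs]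
        have hbound : ∀ᵐ y ∂((ν : Measure K).restrict B), ‖g x - g y‖ ≤ ε := by
          filter_upwards [ae_restrict_mem mB] with y hy
          rw [Real.norm_eq_abs]
          have hd : dist x y < δ := by rw [dist_comm]; exact hy
          have := hgε x y hd
          simpa [abs_sub_comm] using this
        have := norm_integral_le_of_norm_le_const hbound
        simpa [Measure.restrict_apply_univ, measureReal_def] using this
      have h2 := hl₂ g hg ε hε hgε
      rw [hν₂coe] at h2
      have hmassplit : ((ν : Measure K) Set.univ).toReal
          = ((ν : Measure K) B).toReal + ((ν : Measure K) Bᶜ).toReal := by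
        rw [← ENNReal.toReal_add hBfin (measure_ne_top _ _), measure_add_measure_compl mB]
      have hrc : (((ν : Measure K).restrict Bᶜ) Set.univ).toReal = ((ν : Measure K) Bᶜ).toReal := by
        rw [Measure.restrict_apply_univ]
      rw [hrc] at h2
      have hgoal : ((List.map (fun p => (p.1 : ℝ) • g p.2)
            ((((((ν : Measure K) B).toNNReal : ℝ≥0), x) :: l₂ : List (ℝ≥0 × K)))).sum : ℝ)
          = ((ν : Measure K) B).toReal * g x
            + (List.map (fun p => (p.1 : ℝ) • g p.2) l₂).sum := by
        simp [List.map_cons, List.sum_cons, smul_eq_mul, hc]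
      rw [hgoal, hIsplit, hmassplit]
      have hre : ((ν : Measure K) B).toReal * g x
            + (List.map (fun p => (p.1 : ℝ) • g p.2) l₂).sum
            - ((∫ y, g y ∂((ν : Measure K).restrict B))
              + ∫ y, g y ∂((ν : Measure K).restrict Bᶜ))
          = (((ν : Measure K) B).toReal * g x - ∫ y, g y ∂((ν : Measure K).restrict B))
            + ((List.map (fun p => (p.1 : ℝ) • g p.2) l₂).sum
              - ∫ y, g y ∂((ν : Measure K).restrict Bᶜ)) := by ring
      rw [hre, mul_add]
      exact (abs_add_le _ _).trans (add_le_add h1 h2)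

end MetricAux

section Approx
variable [TopologicalSpace K] [CompactSpace K] [TopologicalSpace.MetrizableSpace K]
  [MeasurableSpace K] [BorelSpace K]

lemma exists_approx (μ : FiniteMeasure K) :
    ∃ L : ℕ → List (ℝ≥0 × K), Tendsto (fun n => comboFM (L n)) atTop (𝓝 μ) := by
  letI : MetricSpace K := TopologicalSpace.metrizableSpaceMetric K
  have hδ : ∀ n : ℕ, (0:ℝ) < 1 / (n + 1) := fun n => by positivity
  have hex : ∀ n : ℕ, ∃ l : List (ℝ≥0 × K),
      ∀ (g : K → ℝ), Continuous g → ∀ ε : ℝ, 0 ≤ ε →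
        (∀ a b : K, dist a b < 1 / (n + 1) → |g a - g b| ≤ ε) →
        |((l.map fun p => (p.1 : ℝ) • g p.2).sum) - ∫ x, g x ∂(μ : Measure K)|
          ≤ ε * ((μ : Measure K) Set.univ).toReal := by
    intro n
    obtain ⟨t, ht⟩ := isCompact_univ.elim_finite_subcover
      (fun x : K => ball x (1 / (n + 1))) (fun x => isOpen_ball)
      (fun x _ => Set.mem_iUnion.mpr ⟨x, mem_ball_self (hδ n)⟩)
    have hcov : (μ : Measure K) ((⋃ x ∈ t.toList, ball x (1 / ((n:ℝ) + 1)))ᶜ) = 0 := by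
      have h1 : (⋃ x ∈ t.toList, ball x (1 / ((n:ℝ) + 1))) = Set.univ := by
        apply Set.univ_subset_iff.mp
        simpa [Finset.mem_toList] using ht
      rw [h1, Set.compl_univ]
      exact measure_empty
    exact aux_partition _ (hδ n) t.toList μ hcov
  choose L hL using hex
  refine ⟨L, ?_⟩
  rw [FiniteMeasure.tendsto_iff_forall_integral_tendsto]
  intro φ
  have hplot : ∀ n, (∫ x, φ x ∂(comboFM (L n) : Measure K))
      = ((L n).map fun p => (p.1 : ℝ) • φ p.2).sum :=
    fun n => integral_comboFM _ φ.continuous _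
  rw [Metric.tendsto_atTop]
  intro ε' hε'
  set M := ((μ : Measure K) Set.univ).toReal with hM
  have hM0 : 0 ≤ M := ENNReal.toReal_nonneg
  set ε : ℝ := ε' / (2 * (M + 1)) with hε
  have hεpos : 0 < ε := by positivity
  obtain ⟨δ₀, hδ₀pos, hδ₀⟩ := Metric.uniformContinuous_iff.mp
    (CompactSpace.uniformContinuous_of_continuous φ.continuous) ε hεpos
  obtain ⟨N, hN⟩ := exists_nat_one_div_lt hδ₀pos
  refine ⟨N, fun n hn => ?_⟩
  have hδn : (1 : ℝ) / (n + 1) < δ₀ := by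
    refine lt_of_le_of_lt ?_ hN
    apply one_div_le_one_div_of_le
    · positivity
    · have : (N : ℝ) ≤ n := Nat.cast_le.mpr hn
      linarith
  have hb : ∀ a b : K, dist a b < 1 / ((n:ℝ) + 1) → |φ a - φ b| ≤ ε := by
    intro a b hab
    have h := hδ₀ (lt_trans hab hδn)
    rw [Real.dist_eq] at h
    exact le_of_lt h
  have hkey := hL n φ φ.continuous ε (le_of_lt hεpos) hb
  rw [Real.dist_eq, hplot n]
  refine lt_of_le_of_lt hkey ?_
  have h1 : ε * (M + 1) = ε' / 2 := by
    rw [hε]; field_simp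
  nlinarith

end Approx

section ContInt
variable [TopologicalSpace K] [CompactSpace K] [TopologicalSpace.MetrizableSpace K]
  [MeasurableSpace K] [BorelSpace K]
  [NormedAddCommGroup X] [NormedSpace ℝ X] [CompleteSpace X]

lemma cont_integral (f : K → X) (hf : Continuous f) :
    Continuous fun μ : FiniteMeasure K => ∫ x, f x ∂(μ : Measure K) := by
  letI : MetricSpace K := TopologicalSpace.metrizableSpaceMetric K
  rw [continuous_iff_continuousAt]
  intro μ₀
  rw [ContinuousAt, Metric.tendsto_nhds]
  intro ε' hε'
  set M : ℝ := ((μ₀ : Measure K) Set.univ).toReal + 1 with hM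
  have hM1 : 0 < M := by
    have : (0:ℝ) ≤ ((μ₀ : Measure K) Set.univ).toReal := ENNReal.toReal_nonneg
    linarith
  set ε : ℝ := ε' / (4 * M) with hε
  have hεpos : 0 < ε := by positivity
  obtain ⟨δ, hδpos, hδ⟩ := Metric.uniformContinuous_iff.mp
    (CompactSpace.uniformContinuous_of_continuous hf) ε hεpos
  obtain ⟨t, ht⟩ := isCompact_univ.elim_finite_subcover (fun x : K => ball x δ)
    (fun x => isOpen_ball) (fun x _ => Set.mem_iUnion.mpr ⟨x, mem_ball_self hδpos⟩)
  set ψ : K → K → ℝ := fun i x => max (δ - dist x i) 0 with hψ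
  have hψcont : ∀ i, Continuous (ψ i) := fun i =>
    ((continuous_const.sub (continuous_id.dist continuous_const)).max continuous_const)
  have hψnonneg : ∀ i x, 0 ≤ ψ i x := fun i x => le_max_right _ _
  set σ : K → ℝ := fun x => ∑ i ∈ t, ψ i x with hσ
  have hσcont : Continuous σ := continuous_finset_sum _ fun i _ => hψcont i
  have hσpos : ∀ x, 0 < σ x := by
    intro x
    obtain ⟨i, hi, hxi⟩ := Set.mem_iUnion₂.mp (ht (Set.mem_univ x))
    have hψi : 0 < ψ i x := by
      simp only [hψ, lt_max_iff]
      left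
      simpa [sub_pos] using hxi
    exact lt_of_lt_of_le hψi (Finset.single_le_sum (fun j _ => hψnonneg j x) hi)
  set φ : K → K → ℝ := fun i x => ψ i x / σ x with hφ
  have hφcont : ∀ i, Continuous (φ i) :=
    fun i => (hψcont i).div hσcont fun x => ne_of_gt (hσpos x)
  have hφnonneg : ∀ i x, 0 ≤ φ i x :=
    fun i x => div_nonneg (hψnonneg i x) (le_of_lt (hσpos x))
  have hφsum : ∀ x, ∑ i ∈ t, φ i x = 1 := by
    intro x
    simp only [hφ]
    rw [← Finset.sum_div]
    exact div_self (ne_of_gt (hσpos x))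
  set F : FiniteMeasure K → X :=
    fun μ => ∑ i ∈ t, (∫ x, φ i x ∂(μ : Measure K)) • f i with hF
  have hFcont : Continuous F := continuous_finset_sum _ fun i _ =>
    (cont_integral_real (φ i) (hφcont i)).smul continuous_const
  have hpt : ∀ x, ‖f x - ∑ i ∈ t, φ i x • f i‖ ≤ ε := by
    intro x
    have h1 : f x = ∑ i ∈ t, φ i x • f x := by
      rw [← Finset.sum_smul, hφsum, one_smul]
    rw [h1, ← Finset.sum_sub_distrib]
    refine (norm_sum_le _ _).trans ?_
    have hterm : ∀ i ∈ t, ‖φ i x • f x - φ i x • f i‖ ≤ φ i x * ε := by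
      intro i hi
      rw [← smul_sub, norm_smul, Real.norm_eq_abs, abs_of_nonneg (hφnonneg i x)]
      rcases eq_or_lt_of_le (hφnonneg i x) with h0 | hpos
      · rw [← h0]; simp
      · refine mul_le_mul_of_nonneg_left ?_ (le_of_lt hpos)
        have hψpos : 0 < ψ i x := by
          by_contra hcon
          push_neg at hcon
          have : ψ i x = 0 := le_antisymm hcon (hψnonneg i x)
          rw [hφ] at hpos
          simp only [this, zero_div] at hpos
          exact lt_irrefl 0 hpos
        have hdist : dist x i < δ := by
          by_contra hcon
          push_neg at hcon
          have : ψ i x = 0 := by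
            simp only [hψ, max_eq_right_iff]
            linarith
          rw [this] at hψpos
          exact lt_irrefl 0 hψpos
        have := hδ hdist
        rw [dist_eq_norm] at this
        exact le_of_lt this
    refine (Finset.sum_le_sum hterm).trans ?_
    rw [← Finset.sum_mul, hφsum, one_mul]
  have hFapprox : ∀ μ : FiniteMeasure K,
      ‖(∫ x, f x ∂(μ : Measure K)) - F μ‖ ≤ ε * ((μ : Measure K) Set.univ).toReal := by
    intro μ
    have hint_f : Integrable f (μ : Measure K) := integrable_cont f hf _
    have hint_i : ∀ i ∈ t, Integrable (fun x => φ i x • f i) (μ : Measure K) :=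
      fun i _ => (integrable_cont (φ i) (hφcont i) _).smul_const (f i)
    have hFval : F μ = ∫ x, (∑ i ∈ t, φ i x • f i) ∂(μ : Measure K) := by
      rw [integral_finset_sum _ hint_i]
      exact Finset.sum_congr rfl fun i _ => (integral_smul_const (φ i) (f i)).symm
    rw [hFval, ← integral_sub hint_f (integrable_finset_sum _ hint_i)]
    exact norm_integral_le_of_norm_le_const (Eventually.of_forall fun x => hpt x)
  have hmass_cont : Continuous fun μ : FiniteMeasure K => ((μ : Measure K) Set.univ).toReal := by
    have h := cont_integral_real (fun _ : K => (1:ℝ)) continuous_const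
    simpa [measureReal_def] using h
  have hev1 : ∀ᶠ μ : FiniteMeasure K in 𝓝 μ₀, ((μ : Measure K) Set.univ).toReal < M := by
    have hlt : ((μ₀ : Measure K) Set.univ).toReal < M := by rw [hM]; linarith
    have hopen : IsOpen {μ : FiniteMeasure K | ((μ : Measure K) Set.univ).toReal < M} :=
      isOpen_lt hmass_cont continuous_const
    exact hopen.mem_nhds hlt
  have hev2 : ∀ᶠ μ in 𝓝 μ₀, ‖F μ - F μ₀‖ < ε' / 4 := by
    have h := Metric.tendsto_nhds.mp (hFcont.tendsto μ₀) (ε' / 4) (by positivity)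
    simpa [dist_eq_norm] using h
  filter_upwards [hev1, hev2] with μ h1 h2
  rw [dist_eq_norm]
  have e1 := hFapprox μ
  have e0 := hFapprox μ₀
  have hsplit : (∫ x, f x ∂(μ : Measure K)) - ∫ x, f x ∂(μ₀ : Measure K)
      = ((∫ x, f x ∂(μ : Measure K)) - F μ) + (F μ - F μ₀)
        + (F μ₀ - ∫ x, f x ∂(μ₀ : Measure K)) := by abel
  rw [hsplit]
  have htri : ‖((∫ x, f x ∂(μ : Measure K)) - F μ) + (F μ - F μ₀)
        + (F μ₀ - ∫ x, f x ∂(μ₀ : Measure K))‖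
      ≤ ‖(∫ x, f x ∂(μ : Measure K)) - F μ‖ + ‖F μ - F μ₀‖
        + ‖F μ₀ - ∫ x, f x ∂(μ₀ : Measure K)‖ :=
    (norm_add_le _ _).trans (by gcongr; exact norm_add_le _ _)
  refine lt_of_le_of_lt htri ?_
  have e0' : ‖F μ₀ - ∫ x, f x ∂(μ₀ : Measure K)‖ ≤ ε * ((μ₀ : Measure K) Set.univ).toReal := by
    rw [norm_sub_rev]; exact e0
  have hεM : ε * M = ε' / 4 := by rw [hε]; field_simp
  have b1 : ‖(∫ x, f x ∂(μ : Measure K)) - F μ‖ ≤ ε' / 4 := by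
    refine e1.trans ?_
    rw [← hεM]
    exact mul_le_mul_of_nonneg_left (le_of_lt h1) (le_of_lt hεpos)
  have b0 : ‖F μ₀ - ∫ x, f x ∂(μ₀ : Measure K)‖ ≤ ε' / 4 := by
    refine e0'.trans ?_
    rw [← hεM]
    refine mul_le_mul_of_nonneg_left ?_ (le_of_lt hεpos)
    rw [hM]; linarith
  linarith

end ContInt

section Uniq
variable [TopologicalSpace K] [CompactSpace K] [TopologicalSpace.MetrizableSpace K]
  [MeasurableSpace K] [BorelSpace K]
  [NormedAddCommGroup X] [NormedSpace ℝ X] [CompleteSpace X]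

lemma S_eq_integral (f : K → X) (hf : Continuous f) (S : FiniteMeasure K → X)
    (hScont : Continuous S)
    (hSadd : ∀ μ ν, S (μ + ν) = S μ + S ν)
    (hShom : ∀ c : ℝ≥0, 0 < c → ∀ μ, S (c • μ) = (c : ℝ) • S μ)
    (hSdirac : ∀ x : K, S (dfm x) = f x) (μ : FiniteMeasure K) :
    S μ = ∫ x, f x ∂(μ : Measure K) := by
  have hS0 : S 0 = 0 := by
    have h := hSadd 0 0
    rw [add_zero] at h
    exact right_eq_add.mp h
  have hcombo : ∀ l : List (ℝ≥0 × K),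
      S (comboFM l) = (l.map fun p => (p.1 : ℝ) • f p.2).sum := by
    intro l
    induction l with
    | nil => simpa [comboFM_nil] using hS0
    | cons p l ih =>
        rw [comboFM_cons, hSadd, ih]
        congr 1
        rcases eq_or_lt_of_le (zero_le (a := p.1)) with h0 | hpos
        · have hp0 : p.1 = 0 := h0.symm
          simp [hp0, hS0]
        · rw [hShom p.1 hpos, hSdirac]
  obtain ⟨L, hL⟩ := exists_approx μ
  have h1 : Tendsto (fun n => S (comboFM (L n))) atTop (𝓝 (S μ)) :=
    (hScont.tendsto μ).comp hL
  have h2 : Tendsto (fun n => ∫ x, f x ∂(comboFM (L n) : Measure K)) atTop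
      (𝓝 (∫ x, f x ∂(μ : Measure K))) :=
    ((cont_integral f hf).tendsto μ).comp hL
  have heq : (fun n => S (comboFM (L n))) = fun n => ∫ x, f x ∂(comboFM (L n) : Measure K) := by
    funext n
    rw [hcombo, integral_comboFM f hf]
  rw [heq] at h1
  exact tendsto_nhds_unique h1 h2

end Uniq
end Stmt7Aux

/-- Parametrization of continuous linear selections of an upper semicontinuous
superlinear set-valued map on the space of finite nonnegative Borel measures on
a compact metrizable space (with the topology of weak convergence) by the
boundary values on Dirac measures: `S_f μ = ∫ f dμ`. -/
theorem stmt7 {K X : Type*}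
    [TopologicalSpace K] [CompactSpace K] [TopologicalSpace.MetrizableSpace K]
    [MeasurableSpace K] [BorelSpace K]
    [NormedAddCommGroup X] [NormedSpace ℝ X] [CompleteSpace X]
    (T : FiniteMeasure K → Set X)
    (hTne : ∀ μ, (T μ).Nonempty) (hTcl : ∀ μ, IsClosed (T μ))
    (hTsuper : ∀ μ ν, T μ + T ν ⊆ T (μ + ν))
    (hThom : ∀ c : ℝ≥0, 0 < c → ∀ μ, T (c • μ) = (c : ℝ) • T μ)
    (hTusc : ∀ G : Set X, IsOpen G → IsOpen {μ : FiniteMeasure K | T μ ⊆ G})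
    (f : K → X) (hf : Continuous f)
    (hfsel : ∀ x : K,
      f x ∈ T (⟨Measure.dirac x, inferInstance⟩ : FiniteMeasure K)) :
    (Continuous fun μ : FiniteMeasure K => ∫ x, f x ∂(μ : Measure K)) ∧
    (∀ μ : FiniteMeasure K, (∫ x, f x ∂(μ : Measure K)) ∈ T μ) ∧
    (∀ μ ν : FiniteMeasure K,
      (∫ x, f x ∂((μ + ν : FiniteMeasure K) : Measure K)) =
        (∫ x, f x ∂(μ : Measure K)) + ∫ x, f x ∂(ν : Measure K)) ∧
    (∀ c : ℝ≥0, 0 < c → ∀ μ : FiniteMeasure K,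
      (∫ x, f x ∂((c • μ : FiniteMeasure K) : Measure K)) =
        (c : ℝ) • ∫ x, f x ∂(μ : Measure K)) ∧
    (∀ S : FiniteMeasure K → X, Continuous S → (∀ μ, S μ ∈ T μ) →
      (∀ μ ν, S (μ + ν) = S μ + S ν) →
      (∀ c : ℝ≥0, 0 < c → ∀ μ, S (c • μ) = (c : ℝ) • S μ) →
      (∀ x : K, S (⟨Measure.dirac x, inferInstance⟩ : FiniteMeasure K) = f x) →
      S = fun μ : FiniteMeasure K => ∫ x, f x ∂(μ : Measure K)) ∧
    (∀ S : FiniteMeasure K → X, Continuous S → (∀ μ, S μ ∈ T μ) →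
      (∀ μ ν, S (μ + ν) = S μ + S ν) →
      (∀ c : ℝ≥0, 0 < c → ∀ μ, S (c • μ) = (c : ℝ) • S μ) →
      (Continuous fun x : K =>
          S (⟨Measure.dirac x, inferInstance⟩ : FiniteMeasure K)) ∧
        ∀ μ : FiniteMeasure K,
          S μ = ∫ x,
            S (⟨Measure.dirac x, inferInstance⟩ : FiniteMeasure K)
              ∂(μ : Measure K)) := by
  have hfsel' : ∀ x : K, f x ∈ T (dfm x) := hfsel
  refine ⟨cont_integral f hf, ?_, ?_, ?_, ?_, ?_⟩
  · -- selection
    intro μ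
    obtain ⟨L, hL⟩ := exists_approx μ
    have hy : Tendsto (fun n => ∫ x, f x ∂(comboFM (L n) : Measure K)) atTop
        (𝓝 (∫ x, f x ∂(μ : Measure K))) := ((cont_integral f hf).tendsto μ).comp hL
    refine mem_of_tendstoT hTne hTcl hTusc hL (fun n => ?_) hy
    rw [integral_comboFM f hf]
    exact combo_mem hTne hTcl hTsuper hThom f hfsel' (L n)
  · -- additivity
    intro μ ν
    rw [FiniteMeasure.toMeasure_add]
    exact integral_add_measure (integrable_cont f hf _) (integrable_cont f hf _)
  · -- homogeneity
    intro c hc μ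
    have h1 : ((c • μ : FiniteMeasure K) : Measure K) = (c : ℝ≥0∞) • (μ : Measure K) := by
      rw [FiniteMeasure.toMeasure_smul]; rfl
    rw [h1, integral_smul_measure]
    simp
  · -- uniqueness
    intro S hScont hSsel hSadd hShom hSdirac
    funext μ
    exact S_eq_integral f hf S hScont hSadd hShom hSdirac μ
  · -- converse
    intro S hScont hSsel hSadd hShom
    have hgcont : Continuous fun x : K => S (dfm x) := hScont.comp continuous_dfm
    refine ⟨hgcont, fun μ => ?_⟩
    exact S_eq_integral (fun x => S (dfm x)) hgcont S hScont hSadd hShom (fun _ => rfl) μ
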